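/- Let 0<β<1, 0≤λ<1 and z0∈D with z0≠0. Then the point -2(1-β) log(1-λ z0) is an interior point of V(z0,λ,β); more precisely, the open set {log F'_{a,λ}(z0) : |a|<1} is contained in V(z0,λ,β) and contains -2(1-β) log(1-λ z0) = log F'_{0,λ}(z0) as an interior point. -/

import Mathlib

open Complex Set MeasureTheory Metric intervalIntegral

noncomputable section

/-- The open unit disk in the complex plane. -/
def unitDisk : Set ℂ := {z : ℂ | ‖z‖ < 1}

/-- Integral of `g` along the segment from `0` to `z0`:
`∫_0^{z0} g(ξ) dξ = ∫_0^1 z0 · g(t z0) dt`. -/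
def segInt (g : ℂ → ℂ) (z0 : ℂ) : ℂ :=
  ∫ t in (0:ℝ)..1, z0 * g ((t : ℂ) * z0)

/-- The branch of `log f'` vanishing at the origin, evaluated at `z0`:
`log f'(z0) = ∫_0^{z0} f''(ξ)/f'(ξ) dξ`. -/
def logDerivAt (f : ℂ → ℂ) (z0 : ℂ) : ℂ :=
  segInt (fun ξ => deriv (deriv f) ξ / deriv f ξ) z0

/-- The class `F(λ,β)`: analytic `f` on the unit disk with `f(0)=0`, `f'(0)=1`,
`f''(0)=2λ(1-β)`, nonvanishing derivative, and `Re(1 + z f''(z)/f'(z)) > β`. -/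
def IsInF (lam beta : ℝ) (f : ℂ → ℂ) : Prop :=
  DifferentiableOn ℂ f unitDisk ∧ f 0 = 0 ∧ deriv f 0 = 1 ∧
    deriv (deriv f) 0 = 2 * (lam : ℂ) * (1 - (beta : ℂ)) ∧
    (∀ z ∈ unitDisk, deriv f z ≠ 0) ∧
    (∀ z ∈ unitDisk, beta < (1 + z * deriv (deriv f) z / deriv f z).re)

/-- The region of variability `V(z0,λ,β) = {log f'(z0) : f ∈ F(λ,β)}`. -/
def V (z0 : ℂ) (lam beta : ℝ) : Set ℂ :=
  {w : ℂ | ∃ f : ℂ → ℂ, IsInF lam beta f ∧ logDerivAt f z0 = w}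

/-- `log F'_{a,λ}(z0) = ∫_0^{z0} 2(1-β)(aξ+λ)/(1+λ(a-1)ξ-aξ²) dξ`. -/
def logFext (a : ℂ) (lam beta : ℝ) (z0 : ℂ) : ℂ :=
  segInt (fun ξ => 2 * (1 - (beta : ℂ)) * (a * ξ + (lam : ℂ)) /
    (1 + (lam : ℂ) * (a - 1) * ξ - a * ξ ^ 2)) z0

/-- The extremal function `F_{a,λ}(z) = ∫_0^z exp(log F'_{a,λ}(ξ)) dξ`. -/
def Fext (a : ℂ) (lam beta : ℝ) (z : ℂ) : ℂ :=
  segInt (fun ξ => Complex.exp (logFext a lam beta ξ)) z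

lemma aux_abs_lt {l : ℝ} (hl0 : 0 ≤ l) (hl1 : l < 1) {u : ℂ} (hu : ‖u‖ < 1) :
    ‖u + (l:ℂ)‖ < ‖1 + (l:ℂ) * u‖ := by
  have h1 : Complex.normSq (1 + (l:ℂ) * u) - Complex.normSq (u + (l:ℂ))
      = (1 - l^2) * (1 - Complex.normSq u) := by
    simp [Complex.normSq_apply, Complex.add_re, Complex.add_im, Complex.mul_re, Complex.mul_im]
    ring
  have h2 : Complex.normSq u < 1 := by
    have := Complex.sq_norm u
    nlinarith [norm_nonneg u]
  have hpos : 0 < (1 - l^2) * (1 - Complex.normSq u) :=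
    mul_pos (by nlinarith) (by linarith)
  have h3 : Complex.normSq (u + (l:ℂ)) < Complex.normSq (1 + (l:ℂ) * u) := by linarith
  have h4 := Complex.sq_norm (u + (l:ℂ))
  have h5 := Complex.sq_norm (1 + (l:ℂ) * u)
  nlinarith [norm_nonneg (u + (l:ℂ)), norm_nonneg (1 + (l:ℂ) * u)]

lemma aux_D_ne {l : ℝ} (hl0 : 0 ≤ l) (hl1 : l < 1) {a z : ℂ}
    (hu : ‖a * z‖ < 1) (hz : ‖z‖ ≤ 1) :
    1 + (l:ℂ) * (a - 1) * z - a * z ^ 2 ≠ 0 := by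
  have key : ‖z * (a * z + (l:ℂ))‖ < ‖1 + (l:ℂ) * (a * z)‖ := by
    calc ‖z * (a * z + (l:ℂ))‖ = ‖z‖ * ‖a * z + (l:ℂ)‖ := by
          simp [map_mul]
      _ ≤ ‖a * z + (l:ℂ)‖ := by
          nlinarith [norm_nonneg (a * z + (l:ℂ)), norm_nonneg z]
      _ < ‖1 + (l:ℂ) * (a * z)‖ := aux_abs_lt hl0 hl1 hu
  intro h
  have : (1 : ℂ) + (l:ℂ) * (a * z) = z * (a * z + (l:ℂ)) := by linear_combination h
  rw [this] at key
  exact lt_irrefl _ key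

lemma aux_one_add_ne {l : ℝ} (hl0 : 0 ≤ l) (hl1 : l < 1) {u : ℂ} (hu : ‖u‖ < 1) :
    (1 : ℂ) + (l:ℂ) * u ≠ 0 := by
  intro h
  have : ‖(l:ℂ) * u‖ < 1 := by
    rw [norm_mul, Complex.norm_real, Real.norm_eq_abs, _root_.abs_of_nonneg hl0]
    nlinarith [norm_nonneg u]
  have h2 : ‖(l:ℂ) * u‖ = 1 := by
    have : (l:ℂ) * u = -1 := by linear_combination h
    rw [this]; simp
  linarith [h2 ▸ this]

lemma aux_w_lt {l : ℝ} (hl0 : 0 ≤ l) (hl1 : l < 1) {a z : ℂ}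
    (hu : ‖a * z‖ < 1) (hz : ‖z‖ < 1) :
    ‖z * (a * z + (l:ℂ)) / (1 + (l:ℂ) * (a * z))‖ < 1 := by
  rw [norm_div, norm_mul]
  have h1 := aux_abs_lt hl0 hl1 hu
  have h2 : 0 < ‖1 + (l:ℂ) * (a * z)‖ :=
    lt_of_le_of_lt (norm_nonneg _) h1
  rw [div_lt_one h2]
  nlinarith [norm_nonneg (a * z + (l:ℂ)), norm_nonneg z]

lemma aux_re_pos {w : ℂ} (hw : ‖w‖ < 1) : 0 < ((1 + w) / (1 - w)).re := by
  have h2 : Complex.normSq w < 1 := by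
    have := Complex.sq_norm w; nlinarith [norm_nonneg w]
  have hne : (1 : ℂ) - w ≠ 0 := by
    intro h
    have : w = 1 := by linear_combination -h
    rw [this] at hw; simp at hw
  rw [Complex.div_re, ← add_div]
  apply div_pos
  · have : (1 + w).re * (1 - w).re + (1 + w).im * (1 - w).im = 1 - Complex.normSq w := by
      simp [Complex.normSq_apply]; ring
    rw [this]; linarith
  · exact Complex.normSq_pos.2 hne

lemma aux_param_deriv {H H' : ℂ → ℝ → ℂ} {x₀ : ℂ} {ε : ℝ} (hε : 0 < ε)
    (hc : ContinuousOn (fun p : ℂ × ℝ => H p.1 p.2) (closedBall x₀ ε ×ˢ uIcc (0:ℝ) 1))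
    (hc' : ContinuousOn (fun p : ℂ × ℝ => H' p.1 p.2) (closedBall x₀ ε ×ˢ uIcc (0:ℝ) 1))
    (hd : ∀ t ∈ uIcc (0:ℝ) 1, ∀ x ∈ ball x₀ ε, HasDerivAt (fun y => H y t) (H' x t) x) :
    HasDerivAt (fun x => ∫ t in (0:ℝ)..1, H x t) (∫ t in (0:ℝ)..1, H' x₀ t) x₀ := by
  have hK : IsCompact (closedBall x₀ ε ×ˢ uIcc (0:ℝ) 1) :=
    (isCompact_closedBall _ _).prod isCompact_uIcc
  obtain ⟨C, hC⟩ := hK.exists_bound_of_continuousOn hc'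
  have hsec : ∀ x ∈ closedBall x₀ ε, ContinuousOn (fun t => H x t) (uIcc (0:ℝ) 1) := by
    intro x hx
    exact hc.comp (continuous_const.prodMk continuous_id).continuousOn
      (fun t ht => ⟨hx, ht⟩)
  have hsec' : ∀ x ∈ closedBall x₀ ε, ContinuousOn (fun t => H' x t) (uIcc (0:ℝ) 1) := by
    intro x hx
    exact hc'.comp (continuous_const.prodMk continuous_id).continuousOn
      (fun t ht => ⟨hx, ht⟩)
  have hx₀ : x₀ ∈ closedBall x₀ ε := mem_closedBall_self hε.le
  have hmeas : ∀ x ∈ closedBall x₀ ε,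
      AEStronglyMeasurable (H x) (volume.restrict (Set.uIoc (0:ℝ) 1)) := fun x hx =>
    ((hsec x hx).mono uIoc_subset_uIcc).aestronglyMeasurable measurableSet_uIoc
  have := hasDerivAt_integral_of_dominated_loc_of_deriv_le (μ := volume)
    (F := H) (F' := H') (x₀ := x₀) (a := 0) (b := 1) (bound := fun _ => C) (ball_mem_nhds x₀ hε)
    (Filter.eventually_of_mem (closedBall_mem_nhds x₀ hε) hmeas)
    ((hsec x₀ hx₀).intervalIntegrable)
    (((hsec' x₀ hx₀).mono uIoc_subset_uIcc).aestronglyMeasurable measurableSet_uIoc)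
    (Filter.Eventually.of_forall fun t ht x hx =>
      hC (x, t) ⟨ball_subset_closedBall hx, uIoc_subset_uIcc ht⟩)
    intervalIntegrable_const
    (Filter.Eventually.of_forall fun t ht x hx => hd t (uIoc_subset_uIcc ht) x hx)
  exact this.2

lemma segInt_zero (g : ℂ → ℂ) : segInt g 0 = 0 := by simp [segInt]

lemma segInt_hasDerivAt {g : ℂ → ℂ} (hg : DifferentiableOn ℂ g (ball (0:ℂ) 1))
    {z : ℂ} (hz : z ∈ ball (0:ℂ) 1) : HasDerivAt (segInt g) (g z) z := by
  have hga : AnalyticOnNhd ℂ g (ball (0:ℂ) 1) := hg.analyticOnNhd isOpen_ball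
  have hgc : ContinuousOn g (ball (0:ℂ) 1) := hg.continuousOn
  have hg'c : ContinuousOn (deriv g) (ball (0:ℂ) 1) := hga.deriv.continuousOn
  rw [mem_ball_zero_iff] at hz
  set ε : ℝ := (1 - ‖z‖) / 2 with hεdef
  have hε : 0 < ε := by simp only [hεdef]; linarith
  have hmem : ∀ x ∈ closedBall z ε, ∀ t ∈ uIcc (0:ℝ) 1, (t:ℂ) * x ∈ ball (0:ℂ) 1 := by
    intro x hx t ht
    rw [mem_closedBall, dist_eq_norm] at hx
    rw [mem_ball_zero_iff, norm_mul, Complex.norm_real, Real.norm_eq_abs]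
    rw [uIcc_of_le (by norm_num : (0:ℝ) ≤ 1), mem_Icc] at ht
    have hxn : ‖x‖ ≤ ‖z‖ + ε := by
      calc ‖x‖ = ‖z + (x - z)‖ := by ring_nf
        _ ≤ ‖z‖ + ‖x - z‖ := norm_add_le _ _
        _ ≤ ‖z‖ + ε := by rw [← dist_eq_norm] at *; linarith [dist_comm x z ▸ hx]
    have : ‖z‖ + ε < 1 := by simp only [hεdef]; linarith
    have h1 : |t| ≤ 1 := by rw [_root_.abs_of_nonneg ht.1]; exact ht.2
    nlinarith [norm_nonneg x, abs_nonneg t]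
  have hmapsTo : MapsTo (fun p : ℂ × ℝ => (p.2 : ℂ) * p.1)
      (closedBall z ε ×ˢ uIcc (0:ℝ) 1) (ball (0:ℂ) 1) := by
    rintro ⟨x, t⟩ ⟨hx, ht⟩
    exact hmem x hx t ht
  have hinner : Continuous (fun p : ℂ × ℝ => (p.2 : ℂ) * p.1) :=
    (Complex.continuous_ofReal.comp continuous_snd).mul continuous_fst
  have hc : ContinuousOn (fun p : ℂ × ℝ => p.1 * g ((p.2 : ℂ) * p.1))
      (closedBall z ε ×ˢ uIcc (0:ℝ) 1) :=
    continuousOn_fst.mul (hgc.comp hinner.continuousOn hmapsTo)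
  have hc' : ContinuousOn (fun p : ℂ × ℝ =>
      g ((p.2 : ℂ) * p.1) + (p.2 : ℂ) * p.1 * deriv g ((p.2 : ℂ) * p.1))
      (closedBall z ε ×ˢ uIcc (0:ℝ) 1) :=
    (hgc.comp hinner.continuousOn hmapsTo).add
      (hinner.continuousOn.mul (hg'c.comp hinner.continuousOn hmapsTo))
  have hd : ∀ t ∈ uIcc (0:ℝ) 1, ∀ x ∈ ball z ε,
      HasDerivAt (fun y => y * g ((t:ℂ) * y))
        (g ((t:ℂ) * x) + (t:ℂ) * x * deriv g ((t:ℂ) * x)) x := by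
    intro t ht x hx
    have hx' : (t:ℂ) * x ∈ ball (0:ℂ) 1 := hmem x (ball_subset_closedBall hx) t ht
    have hgd : HasDerivAt g (deriv g ((t:ℂ) * x)) ((t:ℂ) * x) :=
      (hg.differentiableAt (isOpen_ball.mem_nhds hx')).hasDerivAt
    have h1 : HasDerivAt (fun y : ℂ => (t:ℂ) * y) (t:ℂ) x := by
      simpa using (hasDerivAt_id x).const_mul (t:ℂ)
    have h2 : HasDerivAt (fun y => g ((t:ℂ) * y)) (deriv g ((t:ℂ) * x) * (t:ℂ)) x :=
      hgd.comp x h1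
    have h3 := (hasDerivAt_id x).fun_mul h2
    refine h3.congr_deriv ?_
    simp only [id_eq, one_mul]
    ring
  have key := aux_param_deriv hε hc hc' hd
  have hint : (∫ t in (0:ℝ)..1,
      (g ((t:ℂ) * z) + (t:ℂ) * z * deriv g ((t:ℂ) * z))) = g z := by
    have hmem1 : ∀ t ∈ uIcc (0:ℝ) 1, (t:ℂ) * z ∈ ball (0:ℂ) 1 :=
      fun t ht => hmem z (mem_closedBall_self hε.le) t ht
    have hftc : ∀ t ∈ uIcc (0:ℝ) 1,
        HasDerivAt (fun s : ℝ => (s:ℂ) * g ((s:ℂ) * z))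
          (g ((t:ℂ) * z) + (t:ℂ) * z * deriv g ((t:ℂ) * z)) t := by
      intro t ht
      have hx' : (t:ℂ) * z ∈ ball (0:ℂ) 1 := hmem1 t ht
      have hgd : HasDerivAt g (deriv g ((t:ℂ) * z)) ((t:ℂ) * z) :=
        (hg.differentiableAt (isOpen_ball.mem_nhds hx')).hasDerivAt
      have h1 : HasDerivAt (fun s : ℂ => s * z) z (t:ℂ) := by
        simpa using (hasDerivAt_id (t:ℂ)).mul_const z
      have hgd' : HasDerivAt g (deriv g ((t:ℂ) * z)) ((fun s : ℂ => s * z) (t:ℂ)) := hgd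
      have h2 : HasDerivAt (fun s : ℂ => g (s * z)) (deriv g ((t:ℂ) * z) * z) (t:ℂ) :=
        hgd'.comp (t:ℂ) h1
      have h3 := ((hasDerivAt_id (t:ℂ)).fun_mul h2).comp_ofReal
      refine h3.congr_deriv ?_
      simp only [id_eq, one_mul]
      ring
    have hint2 : IntervalIntegrable
        (fun t : ℝ => g ((t:ℂ) * z) + (t:ℂ) * z * deriv g ((t:ℂ) * z)) volume 0 1 := by
      apply ContinuousOn.intervalIntegrable
      have := hc'.comp ((continuous_const.prodMk continuous_id).continuousOn
        (s := uIcc (0:ℝ) 1)) (fun t ht => ⟨mem_closedBall_self hε.le, ht⟩)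
      exact this
    rw [integral_eq_sub_of_hasDerivAt hftc hint2]
    simp
  rw [hint] at key
  exact key

lemma aux_ga_diff {lam beta : ℝ} (hl0 : 0 ≤ lam) (hl1 : lam < 1) {a : ℂ}
    (ha : ‖a‖ ≤ 1) :
    DifferentiableOn ℂ (fun ξ => 2 * (1 - (beta : ℂ)) * (a * ξ + (lam : ℂ)) /
      (1 + (lam : ℂ) * (a - 1) * ξ - a * ξ ^ 2)) (ball (0:ℂ) 1) := by
  apply DifferentiableOn.div
  · fun_prop
  · fun_prop
  · intro ξ hξ
    rw [mem_ball_zero_iff] at hξ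
    apply aux_D_ne hl0 hl1
    · rw [norm_mul]
      nlinarith [norm_nonneg a, norm_nonneg ξ]
    · exact le_of_lt hξ

lemma aux_re_cond {lam beta : ℝ} (hl0 : 0 ≤ lam) (hl1 : lam < 1) (hb1 : beta < 1) {a z : ℂ}
    (ha : ‖a‖ ≤ 1) (hz : ‖z‖ < 1) :
    (beta : ℝ) < (1 + z * (2 * (1 - (beta : ℂ)) * (a * z + (lam : ℂ)) /
      (1 + (lam : ℂ) * (a - 1) * z - a * z ^ 2))).re := by
  have hu1 : ‖a * z‖ < 1 := by
    rw [norm_mul]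
    nlinarith [norm_nonneg a, norm_nonneg z]
  have hune : (1 : ℂ) + (lam:ℂ) * (a * z) ≠ 0 := aux_one_add_ne hl0 hl1 hu1
  have hDne : 1 + (lam:ℂ) * (a - 1) * z - a * z ^ 2 ≠ 0 := aux_D_ne hl0 hl1 hu1 hz.le
  set w : ℂ := z * (a * z + (lam:ℂ)) / (1 + (lam:ℂ) * (a * z)) with hwdef
  have hw : ‖w‖ < 1 := aux_w_lt hl0 hl1 hu1 hz
  have h1w : (1 : ℂ) - w ≠ 0 := by
    intro h
    have : w = 1 := by linear_combination -h
    rw [this] at hw; simp at hw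
  have hiden : 1 + z * (2 * (1 - (beta : ℂ)) * (a * z + (lam : ℂ)) /
      (1 + (lam : ℂ) * (a - 1) * z - a * z ^ 2))
      = (beta : ℂ) + (1 - (beta : ℂ)) * ((1 + w) / (1 - w)) := by
    have h1mw : (1:ℂ) - w = (1 + (lam:ℂ) * (a - 1) * z - a * z ^ 2) / (1 + (lam:ℂ) * (a * z)) := by
      rw [hwdef, eq_div_iff hune, sub_mul, div_mul_cancel₀ _ hune]
      ring
    have h1pw : (1:ℂ) + w = (1 + (lam:ℂ) * (a * z) + z * (a * z + (lam:ℂ))) / (1 + (lam:ℂ) * (a * z)) := by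
      rw [hwdef, eq_div_iff hune, add_mul, div_mul_cancel₀ _ hune]
      ring
    have hquot : (1 + w) / (1 - w)
        = (1 + (lam:ℂ) * (a * z) + z * (a * z + (lam:ℂ))) / (1 + (lam:ℂ) * (a - 1) * z - a * z ^ 2) := by
      rw [h1pw, h1mw, div_div_div_cancel_right₀ hune]
    rw [hquot]
    rw [← mul_div_assoc, ← mul_div_assoc, add_div' _ _ _ hDne, add_div' _ _ _ hDne,
      div_left_inj' hDne]
    ring
  rw [hiden]
  have hre : ((beta : ℂ) + (1 - (beta : ℂ)) * ((1 + w) / (1 - w))).re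
      = beta + (1 - beta) * ((1 + w) / (1 - w)).re := by
    simp [Complex.add_re, Complex.mul_re, Complex.sub_re, Complex.sub_im]
  rw [hre]
  nlinarith [aux_re_pos hw]

lemma unitDisk_eq : unitDisk = ball (0:ℂ) 1 := by
  ext z; simp [unitDisk, mem_ball_zero_iff]

lemma segInt_congr {g h : ℂ → ℂ} {z0 : ℂ}
    (H : ∀ t : ℝ, t ∈ uIcc (0:ℝ) 1 → g ((t:ℂ) * z0) = h ((t:ℂ) * z0)) :
    segInt g z0 = segInt h z0 :=
  intervalIntegral.integral_congr (fun t ht => by simp only [H t ht])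

lemma extremal_props {lam beta : ℝ} (hl0 : 0 ≤ lam) (hl1 : lam < 1) (hb1 : beta < 1)
    {a : ℂ} (ha : ‖a‖ < 1) :
    IsInF lam beta (Fext a lam beta) ∧
      ∀ z0 ∈ ball (0:ℂ) 1, logDerivAt (Fext a lam beta) z0 = logFext a lam beta z0 := by
  set ga : ℂ → ℂ := fun ξ => 2 * (1 - (beta : ℂ)) * (a * ξ + (lam : ℂ)) /
    (1 + (lam : ℂ) * (a - 1) * ξ - a * ξ ^ 2) with hgadef
  have hgad : DifferentiableOn ℂ ga (ball (0:ℂ) 1) := aux_ga_diff hl0 hl1 ha.le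
  have hL : ∀ z ∈ ball (0:ℂ) 1, HasDerivAt (logFext a lam beta) (ga z) z := by
    intro z hz
    exact segInt_hasDerivAt hgad hz
  have hLd : DifferentiableOn ℂ (fun ξ => Complex.exp (logFext a lam beta ξ)) (ball (0:ℂ) 1) :=
    fun z hz => ((hL z hz).cexp).differentiableAt.differentiableWithinAt
  have hF : ∀ z ∈ ball (0:ℂ) 1,
      HasDerivAt (Fext a lam beta) (Complex.exp (logFext a lam beta z)) z := by
    intro z hz
    exact segInt_hasDerivAt hLd hz
  have hDf : ∀ z ∈ ball (0:ℂ) 1,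
      deriv (Fext a lam beta) z = Complex.exp (logFext a lam beta z) :=
    fun z hz => (hF z hz).deriv
  have hDDf : ∀ z ∈ ball (0:ℂ) 1,
      deriv (deriv (Fext a lam beta)) z = Complex.exp (logFext a lam beta z) * ga z := by
    intro z hz
    have hev : deriv (Fext a lam beta) =ᶠ[nhds z]
        fun w => Complex.exp (logFext a lam beta w) := by
      filter_upwards [isOpen_ball.mem_nhds hz] with w hw using hDf w hw
    rw [hev.deriv_eq]
    exact ((hL z hz).cexp).deriv
  have h0mem : (0:ℂ) ∈ ball (0:ℂ) 1 := by simp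
  have hL0 : logFext a lam beta 0 = 0 := segInt_zero _
  constructor
  · refine ⟨?_, ?_, ?_, ?_, ?_, ?_⟩
    · rw [unitDisk_eq]
      exact fun z hz => (hF z hz).differentiableAt.differentiableWithinAt
    · exact segInt_zero _
    · rw [hDf 0 h0mem, hL0, Complex.exp_zero]
    · rw [hDDf 0 h0mem, hL0, Complex.exp_zero, hgadef]
      simp
      ring
    · rw [unitDisk_eq]
      intro z hz
      rw [hDf z hz]
      exact Complex.exp_ne_zero _
    · rw [unitDisk_eq]
      intro z hz
      rw [hDf z hz, hDDf z hz]
      have hexp : Complex.exp (logFext a lam beta z) ≠ 0 := Complex.exp_ne_zero _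
      have heq : z * (Complex.exp (logFext a lam beta z) * ga z) /
          Complex.exp (logFext a lam beta z) = z * ga z := by
        field_simp
      rw [heq, hgadef]
      rw [mem_ball_zero_iff] at hz
      exact aux_re_cond hl0 hl1 hb1 ha.le hz
  · intro z0 hz0
    rw [mem_ball_zero_iff] at hz0
    apply segInt_congr
    intro t ht
    rw [uIcc_of_le (by norm_num : (0:ℝ) ≤ 1), mem_Icc] at ht
    have htz : ((t:ℂ) * z0) ∈ ball (0:ℂ) 1 := by
      rw [mem_ball_zero_iff, norm_mul, Complex.norm_real, Real.norm_eq_abs,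
        _root_.abs_of_nonneg ht.1]
      nlinarith [norm_nonneg z0]
    rw [hDf _ htz, hDDf _ htz]
    have hexp : Complex.exp (logFext a lam beta ((t:ℂ) * z0)) ≠ 0 := Complex.exp_ne_zero _
    field_simp
    simp only [hgadef]
    ring

lemma logFext_zero_eq {lam beta : ℝ} (hl0 : 0 ≤ lam) (hl1 : lam < 1) {z0 : ℂ}
    (hz0 : ‖z0‖ < 1) :
    logFext 0 lam beta z0 = -2 * (1 - (beta : ℂ)) * Complex.log (1 - (lam : ℂ) * z0) := by
  set c : ℂ := (lam : ℂ) * z0 with hcdef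
  have habsc : ‖c‖ < 1 := by
    rw [hcdef, norm_mul, Complex.norm_real, Real.norm_eq_abs, _root_.abs_of_nonneg hl0]
    nlinarith [norm_nonneg z0]
  have hre : ∀ t : ℝ, t ∈ uIcc (0:ℝ) 1 → 0 < (1 - c * (t:ℂ)).re := by
    intro t ht
    rw [uIcc_of_le (by norm_num : (0:ℝ) ≤ 1), mem_Icc] at ht
    have h1 : (1 - c * (t:ℂ)).re = 1 - c.re * t := by
      simp [Complex.sub_re, Complex.mul_re]
    rw [h1]
    have h2 : |c.re| ≤ ‖c‖ := Complex.abs_re_le_norm c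
    have h3 : |c.re * t| ≤ ‖c‖ := by
      rw [abs_mul, _root_.abs_of_nonneg ht.1]
      nlinarith [abs_nonneg c.re, norm_nonneg c]
    have := abs_le.1 h3
    linarith
  have hne : ∀ t : ℝ, t ∈ uIcc (0:ℝ) 1 → (1 : ℂ) - c * (t:ℂ) ≠ 0 := by
    intro t ht h
    have := hre t ht
    rw [h] at this
    simp at this
  have hder : ∀ t ∈ uIcc (0:ℝ) 1,
      HasDerivAt (fun s : ℝ => -2 * (1 - (beta:ℂ)) * Complex.log (1 - c * (s:ℂ)))
        (z0 * (2 * (1 - (beta : ℂ)) * ((0:ℂ) * ((t:ℂ) * z0) + (lam : ℂ)) /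
          (1 + (lam : ℂ) * ((0:ℂ) - 1) * ((t:ℂ) * z0) - 0 * ((t:ℂ) * z0) ^ 2))) t := by
    intro t ht
    have hslit : (1 : ℂ) - c * (t:ℂ) ∈ Complex.slitPlane := Or.inl (hre t ht)
    have h1 : HasDerivAt (fun s : ℂ => c * s) c (t:ℂ) := by
      simpa using (hasDerivAt_id (t:ℂ)).const_mul c
    have h2 : HasDerivAt (fun s : ℂ => 1 - c * s) (-c) (t:ℂ) := h1.const_sub 1
    have hlog0 : HasDerivAt Complex.log ((1 - c * (t:ℂ))⁻¹)
        ((fun s : ℂ => 1 - c * s) (t:ℂ)) := Complex.hasDerivAt_log hslit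
    have h3 : HasDerivAt (fun s : ℂ => Complex.log (1 - c * s))
        ((1 - c * (t:ℂ))⁻¹ * (-c)) (t:ℂ) := by have := hlog0.comp (t:ℂ) h2; exact this
    have h4 := (h3.const_mul (-2 * (1 - (beta:ℂ)))).comp_ofReal
    convert h4 using 1
    have hne' : (1 : ℂ) - c * (t:ℂ) ≠ 0 := hne t ht
    have hden : 1 + (lam : ℂ) * ((0:ℂ) - 1) * ((t:ℂ) * z0) - 0 * ((t:ℂ) * z0) ^ 2
        = 1 - c * (t:ℂ) := by rw [hcdef]; ring
    rw [hden]
    field_simp [hcdef]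
    ring
  have hint : IntervalIntegrable (fun t : ℝ =>
      z0 * (2 * (1 - (beta : ℂ)) * ((0:ℂ) * ((t:ℂ) * z0) + (lam : ℂ)) /
        (1 + (lam : ℂ) * ((0:ℂ) - 1) * ((t:ℂ) * z0) - 0 * ((t:ℂ) * z0) ^ 2))) volume 0 1 := by
    apply ContinuousOn.intervalIntegrable
    apply ContinuousOn.mul continuousOn_const
    apply ContinuousOn.div (by fun_prop) (by fun_prop)
    intro t ht h
    apply hne t ht
    rw [← h, hcdef]
    ring
  have hLHS : logFext 0 lam beta z0 = ∫ t in (0:ℝ)..1,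
      z0 * (2 * (1 - (beta : ℂ)) * ((0:ℂ) * ((t:ℂ) * z0) + (lam : ℂ)) /
        (1 + (lam : ℂ) * ((0:ℂ) - 1) * ((t:ℂ) * z0) - 0 * ((t:ℂ) * z0) ^ 2)) := rfl
  rw [hLHS, integral_eq_sub_of_hasDerivAt hder hint]
  simp [Complex.log_one]

lemma tz_abs_le {z0 : ℂ} (hz0 : ‖z0‖ < 1) {t : ℝ} (ht : t ∈ uIcc (0:ℝ) 1) :
    ‖(t:ℂ) * z0‖ ≤ ‖z0‖ := by
  rw [uIcc_of_le (by norm_num : (0:ℝ) ≤ 1), mem_Icc] at ht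
  rw [norm_mul, Complex.norm_real, Real.norm_eq_abs, _root_.abs_of_nonneg ht.1]
  nlinarith [norm_nonneg z0]

lemma phi_hasDerivAt {lam beta : ℝ} (hl0 : 0 ≤ lam) (hl1 : lam < 1) {z0 : ℂ}
    (hz0 : ‖z0‖ < 1) {a₀ : ℂ} (ha₀ : ‖a₀‖ * ‖z0‖ < 1) :
    HasDerivAt (fun a => logFext a lam beta z0)
      (∫ t in (0:ℝ)..1, z0 * (2 * (1 - (beta:ℂ)) * (1 - (lam:ℂ)^2) * ((t:ℂ) * z0) /
        (1 + (lam:ℂ) * (a₀ - 1) * ((t:ℂ) * z0) - a₀ * ((t:ℂ) * z0) ^ 2) ^ 2)) a₀ := by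
  set ε : ℝ := (1 - ‖a₀‖ * ‖z0‖) / (2 * (‖z0‖ + 1)) with hεdef
  have habs0 : 0 ≤ ‖z0‖ := norm_nonneg z0
  have hε : 0 < ε := by
    rw [hεdef]
    apply div_pos (by linarith) (by linarith)
  have hεz : ε * (‖z0‖ + 1) = (1 - ‖a₀‖ * ‖z0‖) / 2 := by
    rw [hεdef]; field_simp
  have hxlt : ∀ x ∈ closedBall a₀ ε, ‖x‖ * ‖z0‖ < 1 := by
    intro x hx
    rw [mem_closedBall, dist_eq_norm] at hx
    have h2 : ‖x‖ ≤ ‖a₀‖ + ε := by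
      have h := norm_add_le a₀ (x - a₀)
      simp only [add_sub_cancel] at h
      linarith
    nlinarith [mul_le_mul_of_nonneg_right h2 habs0]
  have hDne : ∀ x ∈ closedBall a₀ ε, ∀ t : ℝ, t ∈ uIcc (0:ℝ) 1 →
      1 + (lam:ℂ) * (x - 1) * ((t:ℂ) * z0) - x * ((t:ℂ) * z0) ^ 2 ≠ 0 := by
    intro x hx t ht
    apply aux_D_ne hl0 hl1
    · rw [norm_mul]
      have h1 := tz_abs_le hz0 ht
      have h2 := hxlt x hx
      nlinarith [norm_nonneg x, norm_nonneg ((t:ℂ) * z0)]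
    · exact le_trans (tz_abs_le hz0 ht) hz0.le
  have key := aux_param_deriv (x₀ := a₀) (ε := ε)
    (H := fun x t => z0 * (2 * (1 - (beta:ℂ)) * (x * ((t:ℂ) * z0) + (lam:ℂ)) /
      (1 + (lam:ℂ) * (x - 1) * ((t:ℂ) * z0) - x * ((t:ℂ) * z0) ^ 2)))
    (H' := fun x t => z0 * (2 * (1 - (beta:ℂ)) * (1 - (lam:ℂ)^2) * ((t:ℂ) * z0) /
      (1 + (lam:ℂ) * (x - 1) * ((t:ℂ) * z0) - x * ((t:ℂ) * z0) ^ 2) ^ 2)) hε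
    (by
      apply ContinuousOn.mul continuousOn_const
      apply ContinuousOn.div (by fun_prop) (by fun_prop)
      rintro ⟨x, t⟩ ⟨hx, ht⟩
      exact hDne x hx t ht)
    (by
      apply ContinuousOn.mul continuousOn_const
      apply ContinuousOn.div (by fun_prop) (by fun_prop)
      rintro ⟨x, t⟩ ⟨hx, ht⟩
      exact pow_ne_zero 2 (hDne x hx t ht))
    (by
      intro t ht x hx
      set ξ : ℂ := (t:ℂ) * z0 with hξdef
      have hD : 1 + (lam:ℂ) * (x - 1) * ξ - x * ξ ^ 2 ≠ 0 :=
        hDne x (ball_subset_closedBall hx) t ht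
      have hN : HasDerivAt (fun y : ℂ => 2 * (1 - (beta:ℂ)) * (y * ξ + (lam:ℂ)))
          (2 * (1 - (beta:ℂ)) * ξ) x := by
        have h1 : HasDerivAt (fun y : ℂ => y * ξ + (lam:ℂ)) ξ x := by
          simpa using ((hasDerivAt_id x).mul_const ξ).add_const ((lam:ℂ))
        simpa using h1.const_mul (2 * (1 - (beta:ℂ)))
      have hDd : HasDerivAt (fun y : ℂ => 1 + (lam:ℂ) * (y - 1) * ξ - y * ξ ^ 2)
          ((lam:ℂ) * ξ - ξ ^ 2) x := by
        have heq : (fun y : ℂ => 1 + (lam:ℂ) * (y - 1) * ξ - y * ξ ^ 2)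
            = fun y : ℂ => ((lam:ℂ) * ξ - ξ ^ 2) * y + (1 - (lam:ℂ) * ξ) := by
          funext y; ring
        rw [heq]
        simpa using ((hasDerivAt_id x).const_mul ((lam:ℂ) * ξ - ξ ^ 2)).add_const (1 - (lam:ℂ) * ξ)
      have hdiv := (hN.div hDd hD).const_mul z0
      refine hdiv.congr_deriv ?_
      have hgoal : z0 * (2 * (1 - (beta:ℂ)) * (1 - (lam:ℂ)^2) * ξ /
          (1 + (lam:ℂ) * (x - 1) * ξ - x * ξ ^ 2) ^ 2)
          = z0 * ((2 * (1 - (beta:ℂ)) * ξ * (1 + (lam:ℂ) * (x - 1) * ξ - x * ξ ^ 2) -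
            2 * (1 - (beta:ℂ)) * (x * ξ + (lam:ℂ)) * ((lam:ℂ) * ξ - ξ ^ 2)) /
          (1 + (lam:ℂ) * (x - 1) * ξ - x * ξ ^ 2) ^ 2) :=
        congrArg (fun q => z0 * q)
          (by rw [div_eq_div_iff (pow_ne_zero 2 hD) (pow_ne_zero 2 hD)]; ring)
      exact hgoal.symm)
  exact key

lemma psi_one_ne {lam beta : ℝ} (hb1 : beta < 1) (hl0 : 0 ≤ lam) (hl1 : lam < 1) {z0 : ℂ}
    (hz0 : ‖z0‖ < 1) (hz0ne : z0 ≠ 0) :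
    (∫ t in (0:ℝ)..1, z0 * (2 * (1 - (beta:ℂ)) * (1 - (lam:ℂ)^2) * ((t:ℂ) * z0) /
      (1 + (lam:ℂ) * ((1:ℂ) - 1) * ((t:ℂ) * z0) - 1 * ((t:ℂ) * z0) ^ 2) ^ 2)) ≠ 0 := by
  set c2 : ℂ := 2 * (1 - (beta:ℂ)) * (1 - (lam:ℂ)^2) with hc2def
  have hc2 : c2 ≠ 0 := by
    rw [hc2def]
    apply mul_ne_zero (mul_ne_zero two_ne_zero ?_) ?_
    · intro h
      have : (beta:ℂ) = 1 := by linear_combination -h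
      have : beta = 1 := by exact_mod_cast this
      linarith
    · intro h
      have : ((lam:ℂ))^2 = 1 := by linear_combination -h
      have h2 : (lam:ℝ)^2 = 1 := by exact_mod_cast this
      nlinarith
  have hsq : ∀ t : ℝ, t ∈ uIcc (0:ℝ) 1 → (1:ℂ) - ((t:ℂ) * z0) ^ 2 ≠ 0 := by
    intro t ht h
    have h1 : ((t:ℂ) * z0) ^ 2 = 1 := by linear_combination -h
    have h2 : ‖((t:ℂ) * z0) ^ 2‖ = 1 := by rw [h1]; simp
    rw [norm_pow] at h2
    have h3 := tz_abs_le hz0 ht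
    nlinarith [norm_nonneg ((t:ℂ) * z0), norm_nonneg z0]
  have hder : ∀ t ∈ uIcc (0:ℝ) 1,
      HasDerivAt (fun s : ℝ => c2 * (2 * (1 - ((s:ℂ) * z0) ^ 2))⁻¹)
        (z0 * (c2 * ((t:ℂ) * z0) /
          (1 + (lam:ℂ) * ((1:ℂ) - 1) * ((t:ℂ) * z0) - 1 * ((t:ℂ) * z0) ^ 2) ^ 2)) t := by
    intro t ht
    have hne : (2:ℂ) * (1 - ((t:ℂ) * z0) ^ 2) ≠ 0 :=
      mul_ne_zero two_ne_zero (hsq t ht)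
    have h1 : HasDerivAt (fun s : ℂ => s * z0) z0 (t:ℂ) := by
      simpa using (hasDerivAt_id (t:ℂ)).mul_const z0
    have h2 : HasDerivAt (fun s : ℂ => (s * z0) ^ 2)
        (2 * ((t:ℂ) * z0) ^ 1 * z0) (t:ℂ) := by
      simpa using h1.fun_pow 2
    have h3 : HasDerivAt (fun s : ℂ => 1 - (s * z0) ^ 2)
        (-(2 * ((t:ℂ) * z0) ^ 1 * z0)) (t:ℂ) := h2.const_sub 1
    have h4 : HasDerivAt (fun s : ℂ => 2 * (1 - (s * z0) ^ 2))
        (2 * -(2 * ((t:ℂ) * z0) ^ 1 * z0)) (t:ℂ) := h3.const_mul 2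
    have h5 := (h4.fun_inv hne).const_mul c2
    have h6 := h5.comp_ofReal
    convert h6 using 1
    have hDsimp : 1 + (lam:ℂ) * ((1:ℂ) - 1) * ((t:ℂ) * z0) - 1 * ((t:ℂ) * z0) ^ 2
        = 1 - ((t:ℂ) * z0) ^ 2 := by ring
    have qne : (1:ℂ) - ((t:ℂ) * z0) ^ 2 ≠ 0 := hsq t ht
    rw [hDsimp, ← mul_div_assoc, ← mul_div_assoc,
      div_eq_div_iff (pow_ne_zero 2 qne) (pow_ne_zero 2 hne)]
    ring
  have hint : IntervalIntegrable (fun t : ℝ => z0 * (c2 * ((t:ℂ) * z0) /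
      (1 + (lam:ℂ) * ((1:ℂ) - 1) * ((t:ℂ) * z0) - 1 * ((t:ℂ) * z0) ^ 2) ^ 2)) volume 0 1 := by
    apply ContinuousOn.intervalIntegrable
    apply ContinuousOn.mul continuousOn_const
    apply ContinuousOn.div (by fun_prop) (by fun_prop)
    intro t ht
    apply pow_ne_zero
    intro h
    apply hsq t ht
    rw [← h]; ring
  rw [show (fun t : ℝ => z0 * (2 * (1 - (beta:ℂ)) * (1 - (lam:ℂ)^2) * ((t:ℂ) * z0) /
      (1 + (lam:ℂ) * ((1:ℂ) - 1) * ((t:ℂ) * z0) - 1 * ((t:ℂ) * z0) ^ 2) ^ 2))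
      = (fun t : ℝ => z0 * (c2 * ((t:ℂ) * z0) /
      (1 + (lam:ℂ) * ((1:ℂ) - 1) * ((t:ℂ) * z0) - 1 * ((t:ℂ) * z0) ^ 2) ^ 2)) from rfl]
  rw [integral_eq_sub_of_hasDerivAt hder hint]
  intro h
  rw [sub_eq_zero] at h
  simp only [Complex.ofReal_one, Complex.ofReal_zero, one_mul, zero_mul] at h
  have h2 := mul_left_cancel₀ hc2 h
  have h3 := inv_injective h2
  have h4 : z0 ^ 2 = 0 := by linear_combination (-(1:ℂ)/2) * h3
  exact hz0ne (pow_eq_zero_iff two_ne_zero |>.1 h4)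

lemma S_open {lam beta : ℝ} (hb1 : beta < 1) (hl0 : 0 ≤ lam) (hl1 : lam < 1) {z0 : ℂ}
    (hz0 : ‖z0‖ < 1) (hz0ne : z0 ≠ 0) :
    IsOpen {w : ℂ | ∃ a : ℂ, ‖a‖ < 1 ∧ logFext a lam beta z0 = w} := by
  set φ : ℂ → ℂ := fun a => logFext a lam beta z0 with hφdef
  set ψ : ℂ → ℂ := fun b => ∫ t in (0:ℝ)..1,
    z0 * (2 * (1 - (beta:ℂ)) * (1 - (lam:ℂ)^2) * ((t:ℂ) * z0) /
      (1 + (lam:ℂ) * (b - 1) * ((t:ℂ) * z0) - b * ((t:ℂ) * z0) ^ 2) ^ 2) with hψdef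
  have habs0 : 0 < ‖z0‖ := by
    rwa [norm_pos_iff]
  set R : ℝ := (‖z0‖)⁻¹ with hRdef
  have hR1 : 1 < R := by
    rw [hRdef]
    rw [lt_inv_comm₀ one_pos habs0]
    simpa using hz0
  have hmemiff : ∀ a : ℂ, a ∈ ball (0:ℂ) R → ‖a‖ * ‖z0‖ < 1 := by
    intro a ha
    rw [mem_ball_zero_iff, hRdef] at ha
    calc ‖a‖ * ‖z0‖ < (‖z0‖)⁻¹ * ‖z0‖ := by
          apply mul_lt_mul_of_pos_right ha habs0
      _ = 1 := inv_mul_cancel₀ (ne_of_gt habs0)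
  have hder : ∀ a ∈ ball (0:ℂ) R, HasDerivAt φ (ψ a) a := by
    intro a ha
    exact phi_hasDerivAt hl0 hl1 hz0 (hmemiff a ha)
  have hdiff : DifferentiableOn ℂ φ (ball (0:ℂ) R) :=
    fun a ha => (hder a ha).differentiableAt.differentiableWithinAt
  have hana : AnalyticOnNhd ℂ φ (ball (0:ℂ) R) := hdiff.analyticOnNhd isOpen_ball
  have hRpos : (0:ℝ) < R := lt_trans one_pos hR1
  have h1mem : (1:ℂ) ∈ ball (0:ℂ) R := by
    rw [mem_ball_zero_iff]
    simpa using hR1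
  have hnc : ¬ ∃ w, ∀ a ∈ ball (0:ℂ) 1, φ a = w := by
    rintro ⟨w, hw⟩
    have h0mem : (0:ℂ) ∈ ball (0:ℂ) R := by simp [hRpos]
    have hEq : EqOn φ (fun _ => w) (ball (0:ℂ) R) := by
      apply hana.eqOn_of_preconnected_of_eventuallyEq analyticOnNhd_const
        ((convex_ball _ _).isPreconnected) h0mem
      filter_upwards [isOpen_ball.mem_nhds (by simp : (0:ℂ) ∈ ball (0:ℂ) 1)] with x hx
        using hw x hx
    have hconst : HasDerivAt (fun _ : ℂ => w) (ψ 1) 1 := by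
      apply (hder 1 h1mem).congr_of_eventuallyEq
      filter_upwards [isOpen_ball.mem_nhds h1mem] with x hx using (hEq hx).symm
    have := hconst.unique (hasDerivAt_const _ _)
    exact psi_one_ne hb1 hl0 hl1 hz0 hz0ne (by rw [hψdef] at this; exact this)
  have hset : {w : ℂ | ∃ a : ℂ, ‖a‖ < 1 ∧ logFext a lam beta z0 = w}
      = φ '' ball (0:ℂ) 1 := by
    ext w
    simp only [Set.mem_setOf_eq, Set.mem_image, mem_ball_zero_iff, hφdef]
  rcases (hana.mono (ball_subset_ball hR1.le)).is_constant_or_isOpen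
      ((convex_ball _ _).isPreconnected) with h | h
  · exact absurd h hnc
  · rw [hset]
    exact h _ (subset_refl _) isOpen_ball

/-- for `0 ≤ λ < 1` and `z0 ∈ D \ {0}`, the set
`{log F'_{a,λ}(z0) : |a| < 1}` is open, is contained in `V(z0,λ,β)`, and contains
`-2(1-β) log(1-λ z0) = log F'_{0,λ}(z0)` as an interior point; in particular
`-2(1-β) log(1-λ z0)` is an interior point of `V(z0,λ,β)`. -/
theorem V_interior_point (beta lam : ℝ) (hbeta : 0 < beta ∧ beta < 1)
    (hlam : 0 ≤ lam ∧ lam < 1) (z0 : ℂ) (hz0 : z0 ∈ unitDisk) (hz0ne : z0 ≠ 0) :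
    IsOpen {w : ℂ | ∃ a : ℂ, ‖a‖ < 1 ∧ logFext a lam beta z0 = w} ∧
    {w : ℂ | ∃ a : ℂ, ‖a‖ < 1 ∧ logFext a lam beta z0 = w} ⊆ V z0 lam beta ∧
    logFext 0 lam beta z0 = -2 * (1 - (beta : ℂ)) * Complex.log (1 - (lam : ℂ) * z0) ∧
    (-2 * (1 - (beta : ℂ)) * Complex.log (1 - (lam : ℂ) * z0))
      ∈ {w : ℂ | ∃ a : ℂ, ‖a‖ < 1 ∧ logFext a lam beta z0 = w} ∧
    (-2 * (1 - (beta : ℂ)) * Complex.log (1 - (lam : ℂ) * z0)) ∈ interior (V z0 lam beta) := by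
  obtain ⟨hb0, hb1⟩ := hbeta
  obtain ⟨hl0, hl1⟩ := hlam
  have hz0' : ‖z0‖ < 1 := hz0
  have hopen := S_open hb1 hl0 hl1 hz0' hz0ne
  have hsub : {w : ℂ | ∃ a : ℂ, ‖a‖ < 1 ∧ logFext a lam beta z0 = w}
      ⊆ V z0 lam beta := by
    rintro w ⟨a, ha, rfl⟩
    obtain ⟨hIn, hlog⟩ := extremal_props hl0 hl1 hb1 ha
    exact ⟨Fext a lam beta, hIn,
      hlog z0 (by rwa [mem_ball_zero_iff])⟩
  have hform := logFext_zero_eq (beta := beta) hl0 hl1 hz0'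
  have hmem : (-2 * (1 - (beta : ℂ)) * Complex.log (1 - (lam : ℂ) * z0))
      ∈ {w : ℂ | ∃ a : ℂ, ‖a‖ < 1 ∧ logFext a lam beta z0 = w} := by
    exact ⟨0, by simp, hform⟩
  exact ⟨hopen, hsub, hform, hmem, mem_interior.2 ⟨_, hsub, hopen, hmem⟩⟩
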